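/- Let V ∈ E_k(F_{q^m}^n) and u ∈ V with rank weight k. The map sending an ordered pair (A,B) of elementary linear subspaces with dim A = a, dim B = k−a, and A ⊕ B = V to the projection u^{(A)} is injective (and similarly (A,B) ↦ u^{(B)} is injective). -/
import Mathlib


open Module Submodule Set Finset

/-- The `F_q`-rank of a vector over `F_{q^m}`: the rank of its matrix representation
over `F_q`, i.e. the `F_q`-dimension of the span of its entries. -/
noncomputable def rkq (Fq : Type) {Fqm : Type} [Field Fq] [Field Fqm] [Algebra Fq Fqm]
    {ι : Type} (v : ι → Fqm) : ℕ :=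
  Module.finrank Fq (Submodule.span Fq (Set.range v))

/-- The ℓ-sum-rank weight of a vector split into ℓ blocks of length η. -/
noncomputable def wtSR (Fq : Type) {Fqm : Type} [Field Fq] [Field Fqm] [Algebra Fq Fqm]
    {l η : ℕ} (x : Fin l → Fin η → Fqm) : ℕ :=
  ∑ i, rkq Fq (x i)

/-- The ℓ-sum-rank distance. -/
noncomputable def dSR (Fq : Type) {Fqm : Type} [Field Fq] [Field Fqm] [Algebra Fq Fqm]
    {l η : ℕ} (x y : Fin l → Fin η → Fqm) : ℕ :=
  wtSR Fq (x - y)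

/-- The ball of sum-rank radius τ around x. -/
noncomputable def srBall (Fq : Type) {Fqm : Type} [Field Fq] [Field Fqm] [Algebra Fq Fqm]
    {l η : ℕ} (x : Fin l → Fin η → Fqm) (τ : ℕ) : Set (Fin l → Fin η → Fqm) :=
  {y | dSR Fq x y ≤ τ}

/-- The Gaussian binomial coefficient `[n choose t]_q = ∏_{i=1}^t (q^{n-t+i}-1)/(q^i-1)`
(the division is exact). -/
def qBinom (q n t : ℕ) : ℕ :=
  (∏ i ∈ Finset.range t, (q ^ (n - t + (i + 1)) - 1)) / (∏ i ∈ Finset.range t, (q ^ (i + 1) - 1))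

/-- `NMq q n m t`: the number of `m × n` matrices over `F_q` of rank `t`. -/
def NMq (q n m t : ℕ) : ℕ :=
  qBinom q n t * ∏ i ∈ Finset.range t, (q ^ m - q ^ i)

/-- A submodule of `F_{q^m}^n` is an elementary linear subspace if it is spanned by
vectors all of whose entries lie in `F_q`. -/
def IsElementary (Fq : Type) {Fqm : Type} [Field Fq] [Field Fqm] [Algebra Fq Fqm]
    {ι : Type} (V : Submodule Fqm (ι → Fqm)) : Prop :=
  ∃ S : Set (ι → Fqm), (∀ v ∈ S, ∀ i, ∃ c : Fq, v i = algebraMap Fq Fqm c) ∧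
    Submodule.span Fqm S = V

section Aux

variable {Fq Fqm : Type} [Field Fq] [Field Fqm] [Algebra Fq Fqm] {n : ℕ}

/-- representation lemma -/
lemma elem_rep (A : Submodule Fqm (Fin n → Fqm)) (hA : IsElementary Fq A)
    {a : ℕ} (hdA : Module.finrank Fqm A = a) (v : Fin n → Fqm) (hv : v ∈ A) :
    ∃ (w : Fin a → Fin n → Fq) (c : Fin a → Fqm),
      Submodule.span Fqm (Set.range (fun j i => algebraMap Fq Fqm (w j i))) = A ∧
      v = fun i => ∑ j, c j * algebraMap Fq Fqm (w j i) := by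
  obtain ⟨S, hS, hSpan⟩ := hA
  obtain ⟨t, htS, htspan, htli⟩ := exists_linearIndependent Fqm S
  rw [hSpan] at htspan
  have hfin : t.Finite := htli.setFinite
  haveI := hfin.fintype
  have hcard : Fintype.card t = a := by
    rw [← Set.toFinset_card, ← finrank_span_set_eq_card htli, htspan, hdA]
  let e : Fin a ≃ t := (Fintype.equivFinOfCardEq hcard).symm
  set b : Fin a → (Fin n → Fqm) := fun j => (e j : Fin n → Fqm) with hb
  have hbli : LinearIndependent Fqm b := htli.comp e e.injective
  have hbrange : Set.range b = t := by
    have : Set.range b = Set.range (Subtype.val : t → (Fin n → Fqm)) :=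
      e.surjective.range_comp Subtype.val
    rw [this, Subtype.range_coe]
  have hbS : ∀ j, b j ∈ S := fun j => htS (by rw [← hbrange]; exact ⟨j, rfl⟩)
  choose w hw using fun j i => hS (b j) (hbS j) i
  have hbw : (fun j i => algebraMap Fq Fqm (w j i)) = b := by
    funext j i; exact (hw j i).symm
  have hspanb : Submodule.span Fqm (Set.range b) = A := by rw [hbrange, htspan]
  refine ⟨w, ?_, ?_, ?_⟩
  · let B := Basis.span hbli
    have hvmem : v ∈ Submodule.span Fqm (Set.range b) := by rw [hspanb]; exact hv
    exact fun j => B.repr ⟨v, hvmem⟩ j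
  · rw [hbw]; exact hspanb
  · let B := Basis.span hbli
    have hvmem : v ∈ Submodule.span Fqm (Set.range b) := by rw [hspanb]; exact hv
    have := B.sum_repr ⟨v, hvmem⟩
    have hcoe := congrArg (Subtype.val) this
    simp only [Submodule.coe_sum, Submodule.coe_smul, Basis.span_apply, B] at hcoe
    funext i
    have := congrFun hcoe i
    simp only [Finset.sum_apply, Pi.smul_apply, smul_eq_mul] at this
    rw [← this]
    congr 1
    funext j
    rw [← hw j i]

/-- rank bound: v in elementary A of dim a has rkq ≤ a -/
lemma rkq_le_of_mem (A : Submodule Fqm (Fin n → Fqm)) (hA : IsElementary Fq A)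
    {a : ℕ} (hdA : Module.finrank Fqm A = a) (v : Fin n → Fqm) (hv : v ∈ A) :
    rkq Fq v ≤ a := by
  obtain ⟨w, c, hspan, hvrep⟩ := elem_rep A hA hdA v hv
  have hsub : Submodule.span Fq (Set.range v) ≤ Submodule.span Fq (Set.range c) := by
    rw [Submodule.span_le]
    rintro _ ⟨i, rfl⟩
    have : v i = ∑ j, w j i • c j := by
      rw [hvrep]
      exact Finset.sum_congr rfl fun j _ => by
        rw [Algebra.smul_def, mul_comm]
    rw [this]
    exact Submodule.sum_mem _ fun j _ =>
      Submodule.smul_mem _ _ (Submodule.subset_span ⟨j, rfl⟩)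
  haveI : FiniteDimensional Fq (Submodule.span Fq (Set.range c)) :=
    FiniteDimensional.span_of_finite Fq (Set.finite_range c)
  calc rkq Fq v ≤ finrank Fq (Submodule.span Fq (Set.range c)) :=
        Submodule.finrank_mono hsub
    _ ≤ Fintype.card (Fin a) := finrank_range_le_card c
    _ = a := Fintype.card_fin a

lemma rkq_add_le (x y : Fin n → Fqm) : rkq Fq (x + y) ≤ rkq Fq x + rkq Fq y := by
  have hsub : Submodule.span Fq (Set.range (x + y)) ≤
      Submodule.span Fq (Set.range x) ⊔ Submodule.span Fq (Set.range y) := by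
    rw [Submodule.span_le]
    rintro _ ⟨i, rfl⟩
    exact Submodule.add_mem _
      (Submodule.mem_sup_left (Submodule.subset_span ⟨i, rfl⟩))
      (Submodule.mem_sup_right (Submodule.subset_span ⟨i, rfl⟩))
  haveI : FiniteDimensional Fq (Submodule.span Fq (Set.range x)) :=
    FiniteDimensional.span_of_finite Fq (Set.finite_range x)
  haveI : FiniteDimensional Fq (Submodule.span Fq (Set.range y)) :=
    FiniteDimensional.span_of_finite Fq (Set.finite_range y)
  calc rkq Fq (x + y) ≤ finrank Fq ↥(Submodule.span Fq (Set.range x) ⊔ Submodule.span Fq (Set.range y)) :=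
        Submodule.finrank_mono hsub
    _ ≤ rkq Fq x + rkq Fq y := Submodule.finrank_add_le_finrank_add_finrank _ _

/-- determination lemma -/
lemma elem_eq_span_dual (A : Submodule Fqm (Fin n → Fqm)) (hA : IsElementary Fq A)
    {a : ℕ} (hdA : Module.finrank Fqm A = a) (v : Fin n → Fqm) (hv : v ∈ A)
    (hr : rkq Fq v = a) :
    A = Submodule.span Fqm (Set.range (fun f : Module.Dual Fq Fqm =>
      fun i => algebraMap Fq Fqm (f (v i)))) := by
  obtain ⟨w, c, hspan, hvrep⟩ := elem_rep A hA hdA v hv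
  have hvi : ∀ i, v i = ∑ j, w j i • c j := by
    intro i
    rw [hvrep]
    exact Finset.sum_congr rfl fun j _ => by rw [Algebra.smul_def, mul_comm]
  have hmem : ∀ i, v i ∈ Submodule.span Fq (Set.range c) := by
    intro i
    rw [hvi]
    exact Submodule.sum_mem _ fun j _ =>
      Submodule.smul_mem _ _ (Submodule.subset_span ⟨j, rfl⟩)
  haveI : FiniteDimensional Fq (Submodule.span Fq (Set.range c)) :=
    FiniteDimensional.span_of_finite Fq (Set.finite_range c)
  have hsub : Submodule.span Fq (Set.range v) ≤ Submodule.span Fq (Set.range c) := by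
    rw [Submodule.span_le]; rintro _ ⟨i, rfl⟩; exact hmem i
  have hfr : Module.finrank Fq (Submodule.span Fq (Set.range c)) = a := by
    refine le_antisymm ((finrank_range_le_card c).trans_eq (Fintype.card_fin a)) ?_
    have h := Submodule.finrank_mono (R := Fq) hsub
    unfold rkq at hr
    omega
  have hcli : LinearIndependent Fq c := by
    rw [linearIndependent_iff_card_eq_finrank_span, Set.finrank, hfr, Fintype.card_fin]
  let Bc := Basis.span hcli
  obtain ⟨p, hp⟩ := Submodule.exists_isCompl (Submodule.span Fq (Set.range c))
  let proj := (Submodule.span Fq (Set.range c)).linearProjOfIsCompl p hp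
  let f : Fin a → Module.Dual Fq Fqm := fun j => (Bc.coord j).comp proj
  have hfv : ∀ j i, f j (v i) = w j i := by
    intro j i
    have h1 : proj (v i) = ⟨v i, hmem i⟩ :=
      Submodule.linearProjOfIsCompl_apply_left hp ⟨v i, hmem i⟩
    have h2 : (⟨v i, hmem i⟩ : Submodule.span Fq (Set.range c)) = ∑ j', w j' i • Bc j' := by
      apply Subtype.ext
      push_cast
      simp only [Bc, Basis.span_apply]
      exact hvi i
    simp only [f, LinearMap.comp_apply, h1, h2, Basis.coord_apply, map_sum, map_smul,
      Basis.repr_self]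
    simp [Finsupp.single_apply]
  apply le_antisymm
  · rw [← hspan, Submodule.span_le]
    rintro _ ⟨j, rfl⟩
    apply Submodule.subset_span
    refine ⟨f j, ?_⟩
    funext i
    show algebraMap Fq Fqm ((f j) (v i)) = algebraMap Fq Fqm (w j i)
    rw [hfv j i]
  · rw [Submodule.span_le]
    rintro _ ⟨g, rfl⟩
    simp only [SetLike.mem_coe]
    show (fun i => algebraMap Fq Fqm (g (v i))) ∈ A
    have : (fun i => algebraMap Fq Fqm (g (v i))) =
        ∑ j, algebraMap Fq Fqm (g (c j)) • (fun i => algebraMap Fq Fqm (w j i)) := by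
      funext i
      simp only [Finset.sum_apply, Pi.smul_apply, smul_eq_mul]
      rw [hvi i, map_sum]
      rw [map_sum]
      exact Finset.sum_congr rfl fun j _ => by
        rw [map_smul, smul_eq_mul, map_mul, mul_comm]
    rw [this]
    refine Submodule.sum_mem _ fun j _ => Submodule.smul_mem _ _ ?_
    rw [← hspan]
    exact Submodule.subset_span ⟨j, rfl⟩

lemma decomp_determined {k a : ℕ} (ha : a ≤ k)
    (u : Fin n → Fqm) (hu : rkq Fq u = k)
    (A B : Submodule Fqm (Fin n → Fqm))
    (hA : IsElementary Fq A) (hB : IsElementary Fq B)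
    (hdA : Module.finrank Fqm A = a) (hdB : Module.finrank Fqm B = k - a)
    (vA vB : Fin n → Fqm) (hvA : vA ∈ A) (hvB : vB ∈ B) (hsum : u = vA + vB) :
    A = Submodule.span Fqm (Set.range (fun f : Module.Dual Fq Fqm =>
        fun i => algebraMap Fq Fqm (f (vA i)))) ∧
    B = Submodule.span Fqm (Set.range (fun f : Module.Dual Fq Fqm =>
        fun i => algebraMap Fq Fqm (f (vB i)))) := by
  have h1 : rkq Fq vA ≤ a := rkq_le_of_mem A hA hdA vA hvA
  have h2 : rkq Fq vB ≤ k - a := rkq_le_of_mem B hB hdB vB hvB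
  have h3 : k ≤ rkq Fq vA + rkq Fq vB := by
    rw [← hu, hsum]; exact rkq_add_le vA vB
  have hrA : rkq Fq vA = a := by omega
  have hrB : rkq Fq vB = k - a := by omega
  exact ⟨elem_eq_span_dual A hA hdA vA hvA hrA, elem_eq_span_dual B hB hdB vB hvB hrB⟩

end Aux

/-- For u of full rank k in the elementary subspace V, the maps (A,B) ↦ u^{(A)} and
(A,B) ↦ u^{(B)} over decompositions V = A ⊕ B into elementary subspaces are injective. -/
theorem proj_injective_on_elementary_decompositions
    (Fq Fqm : Type) [Field Fq] [Field Fqm] [Algebra Fq Fqm] (n k a : ℕ) (ha : a ≤ k)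
    (V : Submodule Fqm (Fin n → Fqm)) (hV : IsElementary Fq V)
    (hdV : Module.finrank Fqm V = k)
    (u : Fin n → Fqm) (huV : u ∈ V) (hu : rkq Fq u = k)
    (A₁ B₁ A₂ B₂ : Submodule Fqm (Fin n → Fqm))
    (hA₁ : IsElementary Fq A₁) (hB₁ : IsElementary Fq B₁)
    (hA₂ : IsElementary Fq A₂) (hB₂ : IsElementary Fq B₂)
    (hdA₁ : Module.finrank Fqm A₁ = a) (hdB₁ : Module.finrank Fqm B₁ = k - a)
    (hdA₂ : Module.finrank Fqm A₂ = a) (hdB₂ : Module.finrank Fqm B₂ = k - a)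
    (hinf₁ : A₁ ⊓ B₁ = ⊥) (hsup₁ : A₁ ⊔ B₁ = V)
    (hinf₂ : A₂ ⊓ B₂ = ⊥) (hsup₂ : A₂ ⊔ B₂ = V)
    (uA₁ uB₁ uA₂ uB₂ : Fin n → Fqm)
    (huA₁ : uA₁ ∈ A₁) (huB₁ : uB₁ ∈ B₁) (hsum₁ : u = uA₁ + uB₁)
    (huA₂ : uA₂ ∈ A₂) (huB₂ : uB₂ ∈ B₂) (hsum₂ : u = uA₂ + uB₂) :
    (uA₁ = uA₂ → A₁ = A₂ ∧ B₁ = B₂) ∧ (uB₁ = uB₂ → A₁ = A₂ ∧ B₁ = B₂) := by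
  obtain ⟨hA1d, hB1d⟩ := decomp_determined ha u hu A₁ B₁ hA₁ hB₁ hdA₁ hdB₁ uA₁ uB₁ huA₁ huB₁ hsum₁
  obtain ⟨hA2d, hB2d⟩ := decomp_determined ha u hu A₂ B₂ hA₂ hB₂ hdA₂ hdB₂ uA₂ uB₂ huA₂ huB₂ hsum₂
  constructor
  · intro hAe
    have hBe : uB₁ = uB₂ := by
      have : uA₁ + uB₁ = uA₂ + uB₂ := by rw [← hsum₁, ← hsum₂]
      rw [hAe] at this
      exact add_left_cancel this
    subst hAe hBe
    exact ⟨hA1d.trans hA2d.symm, hB1d.trans hB2d.symm⟩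
  · intro hBe
    have hAe : uA₁ = uA₂ := by
      have : uA₁ + uB₁ = uA₂ + uB₂ := by rw [← hsum₁, ← hsum₂]
      rw [hBe] at this
      exact add_right_cancel this
    subst hAe hBe
    exact ⟨hA1d.trans hA2d.symm, hB1d.trans hB2d.symm⟩
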